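/- Let p ∈ ℕ with p ≥ 1 and ε₀ ∈ (0,1). Let φ₀ ∈ C₀^∞((−1,0)×S²) and define φ₁(s,ω) := −∂_sφ₀(s,ω) − φ₀(s,ω)·δ − (1/(2(p+1)))·(−∂_sφ₀(s,ω))^{p+1}·δ^{(1−ε₀)p}. For δ ∈ (0,1) define φ(1,x) := δ^{2−ε₀}φ₀((r−1)/δ, x/r) and ∂_tφ(1,x) := δ^{1−ε₀}φ₁((r−1)/δ, x/r) for x ∈ ℝ³∖{0}, r = |x| (extended by zero outside the annulus 1−δ < r < 1). Then there exists a constant C > 0 depending only on φ₀, p, ε₀ such that for all δ ∈ (0,1) and all x ∈ ℝ³∖{0}: |(∂_t + ∂_r)φ(1,x)| = |δ^{1−ε₀}(φ₁ + ∂_sφ₀)((r−1)/δ, x/r)| ≤ C·δ^{2−ε₀−max{0, 1−(1−ε₀)p}}. -/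

import Mathlib

noncomputable section

open scoped BigOperators

/-- Points ω of ℝ³ (with the Euclidean norm). -/
abbrev Sp : Type := EuclideanSpace ℝ (Fin 3)

/-- Points (s, ω) ∈ ℝ × ℝ³ (the sphere variable ω is evaluated on ‖ω‖ = 1). -/
abbrev Spt : Type := ℝ × Sp

/-- The derivative ∂_s in the first argument. -/
def pds (f : Spt → ℝ) (q : Spt) : ℝ := fderiv ℝ f q (1, 0)

/-- The choice (A.1) of φ₁:
φ₁ = −∂_sφ₀ − φ₀·δ − (1/(2(p+1)))·(−∂_sφ₀)^{p+1}·δ^{(1−ε₀)p}. -/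
def phi1 (p : ℕ) (ε₀ : ℝ) (φ₀ : Spt → ℝ) (δ : ℝ) (q : Spt) : ℝ :=
  -pds φ₀ q - φ₀ q * δ
    - (1 / (2 * ((p : ℝ) + 1))) * (-pds φ₀ q) ^ (p + 1) * δ ^ ((1 - ε₀) * p)

/-- Appendix A, first-order case (A.3): with the choice (A.1) of φ₁, the short pulse data
satisfy the outgoing constraint |(∂_t+∂_r)φ(1,x)| = |δ^{1−ε₀}(φ₁+∂_sφ₀)((r−1)/δ, x/r)|
≤ C·δ^{2−ε₀−max{0,1−(1−ε₀)p}}. -/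
theorem outgoing_constraint_first_order
    (p : ℕ) (hp : 1 ≤ p) (ε₀ : ℝ) (hε : ε₀ ∈ Set.Ioo (0 : ℝ) 1)
    (φ₀ : Spt → ℝ) (hφ₀ : ContDiff ℝ (⊤ : ℕ∞) φ₀)
    (hsupp : ∀ (s : ℝ) (ω : Sp), s ∉ Set.Ioo (-1 : ℝ) 0 → φ₀ (s, ω) = 0) :
    ∃ C > (0 : ℝ), ∀ δ ∈ Set.Ioo (0 : ℝ) 1, ∀ x : Sp, x ≠ 0 →
      |δ ^ (1 - ε₀) *
          (phi1 p ε₀ φ₀ δ ((‖x‖ - 1) / δ, ‖x‖⁻¹ • x)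
            + pds φ₀ ((‖x‖ - 1) / δ, ‖x‖⁻¹ • x))|
        ≤ C * δ ^ (2 - ε₀ - max 0 (1 - (1 - ε₀) * p)) := by
  obtain ⟨hε0, hε1⟩ := hε
  -- φ₀ and its s-derivative vanish off Icc
  have hφ0' : ∀ q : Spt, q.1 ∉ Set.Icc (-1:ℝ) 0 → φ₀ q = 0 := by
    intro q hq
    exact hsupp q.1 q.2 (fun h => hq ⟨le_of_lt h.1, le_of_lt h.2⟩)
  have hpds0 : ∀ q : Spt, q.1 ∉ Set.Icc (-1:ℝ) 0 → pds φ₀ q = 0 := by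
    intro q hq
    have hopen : IsOpen {r : Spt | r.1 ∉ Set.Icc (-1:ℝ) 0} := by
      have := (isClosed_Icc (a := (-1:ℝ)) (b := 0)).preimage (continuous_fst (X := ℝ) (Y := Sp))
      exact this.isOpen_compl
    have hev : φ₀ =ᶠ[nhds q] (fun _ => 0) := by
      filter_upwards [hopen.mem_nhds hq] with r hr
      exact hφ0' r hr
    unfold pds
    rw [hev.fderiv_eq]
    simp
  -- bounds on the compact set
  set K : Set Spt := Set.Icc (-1:ℝ) 0 ×ˢ Metric.sphere (0:Sp) 1 with hKdef
  have hK : IsCompact K := isCompact_Icc.prod (isCompact_sphere 0 1)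
  have hc0 : Continuous φ₀ := hφ₀.continuous
  have hc1 : Continuous (pds φ₀) := by
    have h := hφ₀.continuous_fderiv (by simp)
    exact h.clm_apply continuous_const
  obtain ⟨M₀, hM₀⟩ := hK.exists_bound_of_continuousOn hc0.continuousOn
  obtain ⟨M₁, hM₁⟩ := hK.exists_bound_of_continuousOn hc1.continuousOn
  set N₀ : ℝ := max M₀ 0 with hN₀def
  set N₁ : ℝ := max M₁ 0 with hN₁def
  have hN₀ : 0 ≤ N₀ := le_max_right _ _
  have hN₁ : 0 ≤ N₁ := le_max_right _ _
  set c : ℝ := 1 / (2 * ((p : ℝ) + 1)) with hcdef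
  have hc : 0 < c := by positivity
  refine ⟨N₀ + c * N₁ ^ (p + 1) + 1, by positivity, ?_⟩
  rintro δ ⟨hδ0, hδ1⟩ x hx
  set q : Spt := ((‖x‖ - 1) / δ, ‖x‖⁻¹ • x) with hqdef
  have hbound0 : |φ₀ q| ≤ N₀ := by
    by_cases hq : q.1 ∈ Set.Icc (-1:ℝ) 0
    · have hqK : q ∈ K := by
        refine ⟨hq, ?_⟩
        simp only [mem_sphere_iff_norm, sub_zero, hqdef]
        rw [norm_smul, norm_inv, norm_norm]
        field_simp [norm_ne_zero_iff.mpr hx]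
      calc |φ₀ q| = ‖φ₀ q‖ := (Real.norm_eq_abs _).symm
        _ ≤ M₀ := hM₀ q hqK
        _ ≤ N₀ := le_max_left _ _
    · rw [hφ0' q hq]; simpa using hN₀
  have hbound1 : |pds φ₀ q| ≤ N₁ := by
    by_cases hq : q.1 ∈ Set.Icc (-1:ℝ) 0
    · have hqK : q ∈ K := by
        refine ⟨hq, ?_⟩
        simp only [mem_sphere_iff_norm, sub_zero, hqdef]
        rw [norm_smul, norm_inv, norm_norm]
        field_simp [norm_ne_zero_iff.mpr hx]
      calc |pds φ₀ q| = ‖pds φ₀ q‖ := (Real.norm_eq_abs _).symm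
        _ ≤ M₁ := hM₁ q hqK
        _ ≤ N₁ := le_max_left _ _
    · rw [hpds0 q hq]; simpa using hN₁
  set e : ℝ := 2 - ε₀ - max 0 (1 - (1 - ε₀) * p) with hedef
  have hδ1' : δ ≤ 1 := le_of_lt hδ1
  have hrp1 : δ ^ (1 - ε₀) * δ ≤ δ ^ e := by
    rw [← Real.rpow_add_one (ne_of_gt hδ0)]
    apply Real.rpow_le_rpow_of_exponent_ge hδ0 hδ1'
    have : (0:ℝ) ≤ max 0 (1 - (1 - ε₀) * p) := le_max_left _ _
    linarith
  have hrp2 : δ ^ (1 - ε₀) * δ ^ ((1 - ε₀) * p) ≤ δ ^ e := by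
    rw [← Real.rpow_add hδ0]
    apply Real.rpow_le_rpow_of_exponent_ge hδ0 hδ1'
    have : (1 - (1 - ε₀) * p) ≤ max 0 (1 - (1 - ε₀) * p) := le_max_right _ _
    linarith
  have hδp : 0 < δ ^ (1 - ε₀) := Real.rpow_pos_of_pos hδ0 _
  have hδp2 : 0 < δ ^ ((1 - ε₀) * p) := Real.rpow_pos_of_pos hδ0 _
  have key : phi1 p ε₀ φ₀ δ q + pds φ₀ q
      = -(φ₀ q * δ) - c * (-pds φ₀ q) ^ (p + 1) * δ ^ ((1 - ε₀) * p) := by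
    simp only [phi1, hcdef]; ring
  rw [key]
  have step1 : |δ ^ (1 - ε₀) * (-(φ₀ q * δ) - c * (-pds φ₀ q) ^ (p + 1) * δ ^ ((1 - ε₀) * p))|
      ≤ δ ^ (1 - ε₀) * (|φ₀ q| * δ + c * |pds φ₀ q| ^ (p + 1) * δ ^ ((1 - ε₀) * p)) := by
    rw [abs_mul, abs_of_pos hδp]
    apply mul_le_mul_of_nonneg_left _ (le_of_lt hδp)
    calc |(-(φ₀ q * δ) - c * (-pds φ₀ q) ^ (p + 1) * δ ^ ((1 - ε₀) * p))|
        ≤ |φ₀ q * δ| + |c * (-pds φ₀ q) ^ (p + 1) * δ ^ ((1 - ε₀) * p)| := by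
          calc _ ≤ |(-(φ₀ q * δ))| + |c * (-pds φ₀ q) ^ (p + 1) * δ ^ ((1 - ε₀) * p)| :=
                abs_sub _ _
            _ = _ := by rw [abs_neg]
      _ = |φ₀ q| * δ + c * |pds φ₀ q| ^ (p + 1) * δ ^ ((1 - ε₀) * p) := by
          rw [abs_mul, abs_mul, abs_mul, abs_of_pos hδ0, abs_of_pos hc, abs_of_pos hδp2,
            abs_pow, abs_neg]
  refine le_trans step1 ?_
  have step2 : δ ^ (1 - ε₀) * (|φ₀ q| * δ + c * |pds φ₀ q| ^ (p + 1) * δ ^ ((1 - ε₀) * p))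
      ≤ N₀ * δ ^ e + c * N₁ ^ (p + 1) * δ ^ e := by
    rw [mul_add]
    apply add_le_add
    · calc δ ^ (1 - ε₀) * (|φ₀ q| * δ) = |φ₀ q| * (δ ^ (1 - ε₀) * δ) := by ring
        _ ≤ N₀ * δ ^ e := by
            apply mul_le_mul hbound0 hrp1 (by positivity) hN₀
    · calc δ ^ (1 - ε₀) * (c * |pds φ₀ q| ^ (p + 1) * δ ^ ((1 - ε₀) * p))
          = c * (|pds φ₀ q| ^ (p + 1) * (δ ^ (1 - ε₀) * δ ^ ((1 - ε₀) * p))) := by ring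
        _ ≤ c * (N₁ ^ (p + 1) * δ ^ e) := by
            apply mul_le_mul_of_nonneg_left _ (le_of_lt hc)
            apply mul_le_mul (pow_le_pow_left₀ (abs_nonneg _) hbound1 _) hrp2
              (by positivity) (by positivity)
        _ = c * N₁ ^ (p + 1) * δ ^ e := by ring
  refine le_trans step2 ?_
  have hδe : 0 < δ ^ e := Real.rpow_pos_of_pos hδ0 _
  nlinarith [hδe, hN₀, hN₁, hc, pow_nonneg hN₁ (p+1)]
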